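/- Under the hypotheses of the previous double-null Gronwall lemma (with $\delta_1 \delta_2 < 1$), one also has $\int_{v_1}^{v_2} \Theta(u_2, v)\,dv \le \frac{1}{1-\delta_1\delta_2} \int_{v_1}^{v_2} \Theta(u_1, v)\,dv + \frac{\delta_2}{1 - \delta_1\delta_2}\int_{u_1}^{u_2} Z(u, v_1)\,du$, and hence $\int_{u_1}^{u_2} Z(u,v_2)\,du + \int_{v_1}^{v_2}\Theta(u_2,v)\,dv \le C(\delta_1, \delta_2)\left(\int_{u_1}^{u_2} Z(u,v_1)\,du + \int_{v_1}^{v_2}\Theta(u_1,v)\,dv\right)$ with $C(\delta_1,\delta_2) = \frac{1 + \max(\delta_1, \delta_2)}{1 - \delta_1\delta_2}$. -/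

import Mathlib

open MeasureTheory

lemma aux_int (u1 u2 v1 v2 δ : ℝ) (hu : u1 ≤ u2) (hv : v1 ≤ v2)
    (a : ℝ → ℝ → ℝ) (φ f f0 : ℝ → ℝ)
    (hameas : Measurable fun q : ℝ × ℝ => a q.1 q.2)
    (hφmeas : Measurable φ)
    (hann : ∀ u ∈ Set.Icc u1 u2, ∀ v ∈ Set.Icc v1 v2, 0 ≤ a u v)
    (hφnn : ∀ v ∈ Set.Icc v1 v2, 0 ≤ φ v)
    (haint : ∀ v ∈ Set.Icc v1 v2, IntervalIntegrable (fun u => a u v) volume u1 u2)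
    (ha : ∀ v ∈ Set.Icc v1 v2, (∫ u in u1..u2, a u v) ≤ δ)
    (hfint : IntervalIntegrable f volume u1 u2)
    (hf0int : IntervalIntegrable f0 volume u1 u2)
    (hφint : IntervalIntegrable φ volume v1 v2)
    (hineq : ∀ u ∈ Set.Icc u1 u2, f u ≤ f0 u + ∫ x in v1..v2, a u x * φ x) :
    (∫ u in u1..u2, f u) ≤ (∫ u in u1..u2, f0 u) + δ * ∫ x in v1..v2, φ x := by
  have hSsub : Set.Ioc u1 u2 ⊆ Set.Icc u1 u2 := Set.Ioc_subset_Icc_self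
  have hTsub : Set.Ioc v1 v2 ⊆ Set.Icc v1 v2 := Set.Ioc_subset_Icc_self
  have hφT : Integrable φ (volume.restrict (Set.Ioc v1 v2)) :=
    (intervalIntegrable_iff_integrableOn_Ioc_of_le hv).mp hφint
  have haT : ∀ x ∈ Set.Icc v1 v2,
      Integrable (fun u => a u x) (volume.restrict (Set.Ioc u1 u2)) := fun x hx =>
    (intervalIntegrable_iff_integrableOn_Ioc_of_le hu).mp (haint x hx)
  have haInt_le : ∀ x ∈ Set.Icc v1 v2,
      (∫ u in Set.Ioc u1 u2, a u x) ≤ δ := by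
    intro x hx
    rw [← intervalIntegral.integral_of_le hu]
    exact ha x hx
  have ha_nn_ae : ∀ x ∈ Set.Icc v1 v2,
      0 ≤ᵐ[volume.restrict (Set.Ioc u1 u2)] fun u => a u x := fun x hx =>
    (ae_restrict_iff' measurableSet_Ioc).2
      (Filter.Eventually.of_forall fun u hu' => hann u (hSsub hu') x hx)
  have hφ_nn_ae : 0 ≤ᵐ[volume.restrict (Set.Ioc v1 v2)] φ :=
    (ae_restrict_iff' measurableSet_Ioc).2
      (Filter.Eventually.of_forall fun x hx => hφnn x (hTsub hx))
  have hFmeas : Measurable fun q : ℝ × ℝ => a q.1 q.2 * φ q.2 :=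
    hameas.mul (hφmeas.comp measurable_snd)
  have hprodmem : ∀ᵐ q : ℝ × ℝ
      ∂((volume.restrict (Set.Ioc u1 u2)).prod (volume.restrict (Set.Ioc v1 v2))),
      q.1 ∈ Set.Icc u1 u2 ∧ q.2 ∈ Set.Icc v1 v2 := by
    rw [Measure.prod_restrict]
    filter_upwards [ae_restrict_mem (measurableSet_Ioc.prod measurableSet_Ioc)] with q hq
    exact ⟨hSsub hq.1, hTsub hq.2⟩
  have hF : Integrable (fun q : ℝ × ℝ => a q.1 q.2 * φ q.2)
      ((volume.restrict (Set.Ioc u1 u2)).prod (volume.restrict (Set.Ioc v1 v2))) := by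
    refine ⟨hFmeas.aestronglyMeasurable, ?_⟩
    rw [hasFiniteIntegral_def]
    have hle : (∫⁻ q, ‖a q.1 q.2 * φ q.2‖ₑ
          ∂((volume.restrict (Set.Ioc u1 u2)).prod (volume.restrict (Set.Ioc v1 v2))))
        = ∫⁻ q, ENNReal.ofReal (a q.1 q.2) * ENNReal.ofReal (φ q.2)
          ∂((volume.restrict (Set.Ioc u1 u2)).prod (volume.restrict (Set.Ioc v1 v2))) := by
      refine lintegral_congr_ae ?_
      filter_upwards [hprodmem] with q hq
      rw [Real.enorm_eq_ofReal (mul_nonneg (hann _ hq.1 _ hq.2) (hφnn _ hq.2)),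
        ENNReal.ofReal_mul (hann _ hq.1 _ hq.2)]
    have hmeas2 : Measurable fun q : ℝ × ℝ =>
        ENNReal.ofReal (a q.1 q.2) * ENNReal.ofReal (φ q.2) :=
      hameas.ennreal_ofReal.mul ((hφmeas.comp measurable_snd).ennreal_ofReal)
    rw [hle, lintegral_prod_symm' _ hmeas2]
    have hbound : (∫⁻ x, (∫⁻ u, ENNReal.ofReal (a u x) * ENNReal.ofReal (φ x)
          ∂(volume.restrict (Set.Ioc u1 u2))) ∂(volume.restrict (Set.Ioc v1 v2)))
        ≤ ∫⁻ x, ENNReal.ofReal δ * ENNReal.ofReal (φ x)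
          ∂(volume.restrict (Set.Ioc v1 v2)) := by
      refine lintegral_mono_ae ?_
      filter_upwards [ae_restrict_mem measurableSet_Ioc] with x hx
      have hx' := hTsub hx
      have hma : Measurable fun u => ENNReal.ofReal (a u x) :=
        (hameas.comp (measurable_id.prodMk measurable_const)).ennreal_ofReal
      rw [lintegral_mul_const _ hma]
      refine mul_le_mul_left ?_ _
      rw [← ofReal_integral_eq_lintegral_ofReal (haT x hx') (ha_nn_ae x hx')]
      exact ENNReal.ofReal_le_ofReal (haInt_le x hx')
    refine lt_of_le_of_lt hbound ?_
    rw [lintegral_const_mul _ hφmeas.ennreal_ofReal,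
      ← ofReal_integral_eq_lintegral_ofReal hφT hφ_nn_ae]
    exact ENNReal.mul_lt_top ENNReal.ofReal_lt_top ENNReal.ofReal_lt_top
  have hg : Integrable (fun u => ∫ x, a u x * φ x ∂(volume.restrict (Set.Ioc v1 v2)))
      (volume.restrict (Set.Ioc u1 u2)) := hF.integral_prod_left
  have hh : Integrable (fun x => ∫ u, a u x * φ x ∂(volume.restrict (Set.Ioc u1 u2)))
      (volume.restrict (Set.Ioc v1 v2)) := hF.integral_prod_right
  have hfμ : Integrable f (volume.restrict (Set.Ioc u1 u2)) :=
    (intervalIntegrable_iff_integrableOn_Ioc_of_le hu).mp hfint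
  have hf0μ : Integrable f0 (volume.restrict (Set.Ioc u1 u2)) :=
    (intervalIntegrable_iff_integrableOn_Ioc_of_le hu).mp hf0int
  have step1 : (∫ u, f u ∂(volume.restrict (Set.Ioc u1 u2)))
      ≤ ∫ u, (f0 u + ∫ x, a u x * φ x ∂(volume.restrict (Set.Ioc v1 v2)))
        ∂(volume.restrict (Set.Ioc u1 u2)) := by
    refine integral_mono_ae hfμ (hf0μ.add hg) ?_
    filter_upwards [ae_restrict_mem measurableSet_Ioc] with u hu'
    have h := hineq u (hSsub hu')
    rwa [intervalIntegral.integral_of_le hv] at h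
  have step2 : (∫ u, (f0 u + ∫ x, a u x * φ x ∂(volume.restrict (Set.Ioc v1 v2)))
        ∂(volume.restrict (Set.Ioc u1 u2)))
      = (∫ u, f0 u ∂(volume.restrict (Set.Ioc u1 u2)))
        + ∫ u, (∫ x, a u x * φ x ∂(volume.restrict (Set.Ioc v1 v2)))
          ∂(volume.restrict (Set.Ioc u1 u2)) := integral_add hf0μ hg
  have hswap : (∫ u, (∫ x, a u x * φ x ∂(volume.restrict (Set.Ioc v1 v2)))
        ∂(volume.restrict (Set.Ioc u1 u2)))
      = ∫ x, (∫ u, a u x * φ x ∂(volume.restrict (Set.Ioc u1 u2)))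
        ∂(volume.restrict (Set.Ioc v1 v2)) :=
    integral_integral_swap hF
  have step3 : (∫ x, (∫ u, a u x * φ x ∂(volume.restrict (Set.Ioc u1 u2)))
        ∂(volume.restrict (Set.Ioc v1 v2)))
      ≤ ∫ x, δ * φ x ∂(volume.restrict (Set.Ioc v1 v2)) := by
    refine integral_mono_ae hh (hφT.const_mul δ) ?_
    filter_upwards [ae_restrict_mem measurableSet_Ioc] with x hx
    have hx' := hTsub hx
    rw [integral_mul_const]
    exact mul_le_mul_of_nonneg_right (haInt_le x hx') (hφnn x hx')
  have step4 : (∫ x, δ * φ x ∂(volume.restrict (Set.Ioc v1 v2)))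
      = δ * ∫ x, φ x ∂(volume.restrict (Set.Ioc v1 v2)) := integral_const_mul δ φ
  rw [intervalIntegral.integral_of_le hu, intervalIntegral.integral_of_le hu,
    intervalIntegral.integral_of_le hv]
  calc (∫ u in Set.Ioc u1 u2, f u) ≤ _ := step1
    _ = _ := step2
    _ ≤ (∫ u in Set.Ioc u1 u2, f0 u) + δ * ∫ x in Set.Ioc v1 v2, φ x := by
        rw [hswap]
        have := step3.trans_eq step4
        exact add_le_add_right this _

theorem stmt_11 (u1 u2 v1 v2 δ1 δ2 : ℝ) (hu : u1 ≤ u2) (hv : v1 ≤ v2)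
    (hδ1 : 0 ≤ δ1) (hδ2 : 0 ≤ δ2) (hδ : δ1 * δ2 < 1)
    (Z Θ a b : ℝ → ℝ → ℝ)
    (hZmeas : Measurable (fun q : ℝ × ℝ => Z q.1 q.2))
    (hΘmeas : Measurable (fun q : ℝ × ℝ => Θ q.1 q.2))
    (hameas : Measurable (fun q : ℝ × ℝ => a q.1 q.2))
    (hbmeas : Measurable (fun q : ℝ × ℝ => b q.1 q.2))
    (hZnn : ∀ u ∈ Set.Icc u1 u2, ∀ v ∈ Set.Icc v1 v2, 0 ≤ Z u v)
    (hΘnn : ∀ u ∈ Set.Icc u1 u2, ∀ v ∈ Set.Icc v1 v2, 0 ≤ Θ u v)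
    (hann : ∀ u ∈ Set.Icc u1 u2, ∀ v ∈ Set.Icc v1 v2, 0 ≤ a u v)
    (hbnn : ∀ u ∈ Set.Icc u1 u2, ∀ v ∈ Set.Icc v1 v2, 0 ≤ b u v)
    (hZmono : ∀ u ∈ Set.Icc u1 u2, MonotoneOn (fun v => Z u v) (Set.Icc v1 v2))
    (hΘmono : ∀ v ∈ Set.Icc v1 v2, MonotoneOn (fun u => Θ u v) (Set.Icc u1 u2))
    (haint : ∀ v ∈ Set.Icc v1 v2, IntervalIntegrable (fun u => a u v) volume u1 u2)
    (hbint : ∀ u ∈ Set.Icc u1 u2, IntervalIntegrable (fun v => b u v) volume v1 v2)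
    (ha : ∀ v ∈ Set.Icc v1 v2, (∫ u in u1..u2, a u v) ≤ δ1)
    (hb : ∀ u ∈ Set.Icc u1 u2, (∫ v in v1..v2, b u v) ≤ δ2)
    (hZint1 : IntervalIntegrable (fun u => Z u v1) volume u1 u2)
    (hZint2 : IntervalIntegrable (fun u => Z u v2) volume u1 u2)
    (hΘint1 : IntervalIntegrable (fun v => Θ u1 v) volume v1 v2)
    (hΘint2 : IntervalIntegrable (fun v => Θ u2 v) volume v1 v2)
    (hZineq : ∀ u ∈ Set.Icc u1 u2, ∀ v ∈ Set.Icc v1 v2,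
      Z u v ≤ Z u v1 + ∫ x in v1..v, a u x * Θ u2 x)
    (hΘineq : ∀ u ∈ Set.Icc u1 u2, ∀ v ∈ Set.Icc v1 v2,
      Θ u v ≤ Θ u1 v + ∫ x in u1..u, b x v * Z x v2) :
    ((∫ v in v1..v2, Θ u2 v) ≤
      (1 / (1 - δ1 * δ2)) * (∫ v in v1..v2, Θ u1 v) +
        (δ2 / (1 - δ1 * δ2)) * ∫ u in u1..u2, Z u v1) ∧
    (∫ u in u1..u2, Z u v2) + (∫ v in v1..v2, Θ u2 v) ≤
      ((1 + max δ1 δ2) / (1 - δ1 * δ2)) *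
        ((∫ u in u1..u2, Z u v1) + ∫ v in v1..v2, Θ u1 v) := by
  have hu2 : u2 ∈ Set.Icc u1 u2 := Set.right_mem_Icc.mpr hu
  have hv2 : v2 ∈ Set.Icc v1 v2 := Set.right_mem_Icc.mpr hv
  have hv1 : v1 ∈ Set.Icc v1 v2 := Set.left_mem_Icc.mpr hv
  have h1 : (∫ u in u1..u2, Z u v2) ≤ (∫ u in u1..u2, Z u v1)
      + δ1 * ∫ x in v1..v2, Θ u2 x :=
    aux_int u1 u2 v1 v2 δ1 hu hv a (fun x => Θ u2 x) (fun u => Z u v2) (fun u => Z u v1)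
      hameas (hΘmeas.comp (measurable_const.prodMk measurable_id))
      hann (fun x hx => hΘnn u2 hu2 x hx) haint ha
      hZint2 hZint1 hΘint2 (fun u hu' => hZineq u hu' v2 hv2)
  have h2 : (∫ v in v1..v2, Θ u2 v) ≤ (∫ v in v1..v2, Θ u1 v)
      + δ2 * ∫ x in u1..u2, Z x v2 :=
    aux_int v1 v2 u1 u2 δ2 hv hu (fun v u => b u v) (fun x => Z x v2)
      (fun v => Θ u2 v) (fun v => Θ u1 v)
      (hbmeas.comp (measurable_snd.prodMk measurable_fst))
      (hZmeas.comp (measurable_id.prodMk measurable_const))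
      (fun v hv' u hu' => hbnn u hu' v hv')
      (fun x hx => hZnn x hx v2 hv2)
      (fun x hx => hbint x hx) (fun x hx => hb x hx)
      hΘint2 hΘint1 hZint2
      (fun v hv' => hΘineq u2 hu2 v hv')
  have hZ1nn : 0 ≤ ∫ u in u1..u2, Z u v1 :=
    intervalIntegral.integral_nonneg hu (fun u hu' => hZnn u hu' v1 hv1)
  have hΘ1nn : 0 ≤ ∫ v in v1..v2, Θ u1 v :=
    intervalIntegral.integral_nonneg hv (fun x hx => hΘnn u1 (Set.left_mem_Icc.mpr hu) x hx)
  have he : 0 < 1 - δ1 * δ2 := by linarith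
  set IZ1 := ∫ u in u1..u2, Z u v1
  set IZ2 := ∫ u in u1..u2, Z u v2
  set IΘ1 := ∫ v in v1..v2, Θ u1 v
  set IΘ2 := ∫ v in v1..v2, Θ u2 v
  have key2 : (1 - δ1 * δ2) * IΘ2 ≤ IΘ1 + δ2 * IZ1 := by
    nlinarith [h2, mul_le_mul_of_nonneg_left h1 hδ2]
  have key3 : (1 - δ1 * δ2) * IZ2 ≤ IZ1 + δ1 * IΘ1 := by
    nlinarith [mul_le_mul_of_nonneg_left key2 hδ1, mul_le_mul_of_nonneg_left h1 he.le]
  constructor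
  · have heq : 1 / (1 - δ1 * δ2) * IΘ1 + δ2 / (1 - δ1 * δ2) * IZ1
        = (IΘ1 + δ2 * IZ1) / (1 - δ1 * δ2) := by ring
    rw [heq, le_div_iff₀ he]
    nlinarith [key2]
  · rw [div_mul_eq_mul_div, le_div_iff₀ he]
    have hm1 : δ1 ≤ max δ1 δ2 := le_max_left δ1 δ2
    have hm2 : δ2 ≤ max δ1 δ2 := le_max_right δ1 δ2
    nlinarith [key2, key3, mul_nonneg (sub_nonneg.2 hm1) hΘ1nn,
      mul_nonneg (sub_nonneg.2 hm2) hZ1nn]
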